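/- Let H and K be complex Hilbert spaces, let ξ, ξ' ∈ H and η, η' ∈ K be unit vectors, and let u = ξ ⊠ η and v = ξ' ⊠ η' be the associated rank-one operators from H to K. Set φ := ⟪ξ', ξ⟫ · ⟪η, η'⟫ and d := ‖ξ' − ⟪ξ, ξ'⟫·ξ‖ · ‖η' − ⟪η, η'⟫·η‖. Then, in the operator norm, ‖u − v‖² = (1 − Re φ) + √( (1 − Re φ)² − d² ). -/

import Mathlib

open ComplexConjugate


lemma nsq (w : ℂ) : ‖w‖^2 = w.re^2 + w.im^2 := by
  rw [Complex.sq_norm, Complex.normSq_apply]; ring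

lemma quad_id (a b x y x' : ℂ) (β γ : ℝ) (hb : ‖b‖^2 + γ^2 = 1)
    (hx' : x' = conj a * x + (β:ℂ)*y) :
    ‖x‖^2 + ‖x'‖^2 - 2*(conj x * x' * b).re
      = (‖1 - conj a * b‖^2 + γ^2*‖a‖^2) * ‖x‖^2 + β^2*‖y‖^2
        + 2*(((β:ℝ):ℂ)*(a-b) * conj x * y).re := by
  subst hx'
  simp only [nsq] at *
  simp only [Complex.mul_re, Complex.mul_im, Complex.add_re, Complex.add_im,
    Complex.sub_re, Complex.sub_im, Complex.conj_re, Complex.conj_im,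
    Complex.ofReal_re, Complex.ofReal_im, Complex.one_re, Complex.one_im] at *
  linear_combination (-1*(a.re^2+a.im^2)*(x.re^2+x.im^2)) * hb

lemma A11_id (a b : ℂ) (γ : ℝ) (hb : ‖b‖^2 + γ^2 = 1) :
    ‖1 - conj a * b‖^2 + γ^2*‖a‖^2 = 1 - 2*(conj a * b).re + ‖a‖^2 := by
  simp only [nsq] at *
  simp only [Complex.mul_re, Complex.mul_im, Complex.sub_re, Complex.sub_im,
    Complex.conj_re, Complex.conj_im, Complex.one_re, Complex.one_im] at *
  linear_combination (a.re^2+a.im^2) * hb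

lemma z_id (a b : ℂ) (β : ℝ) :
    ‖((β:ℝ):ℂ)*(a-b)‖^2 = β^2 * (‖a‖^2 + ‖b‖^2 - 2*(conj a * b).re) := by
  simp only [nsq]
  simp only [Complex.mul_re, Complex.mul_im, Complex.sub_re, Complex.sub_im,
    Complex.conj_re, Complex.conj_im, Complex.ofReal_re, Complex.ofReal_im]
  ring

lemma hc_nonneg (a b : ℂ) (β γ : ℝ) (ha : ‖a‖^2 + β^2 = 1) (hb : ‖b‖^2 + γ^2 = 1) :
    0 ≤ 1 - (conj a * b).re := by
  have h1 : (conj a * b).re ≤ ‖conj a * b‖ := Complex.re_le_norm _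
  have h2 : ‖conj a * b‖ = ‖a‖ * ‖b‖ := by
    rw [norm_mul, RCLike.norm_conj]
  nlinarith [norm_nonneg a, norm_nonneg b, sq_nonneg β, sq_nonneg γ, sq_nonneg (‖a‖-‖b‖), sq_nonneg (‖a‖*‖b‖-1)]

lemma cd_nonneg (a b : ℂ) (β γ : ℝ)
    (ha : ‖a‖^2 + β^2 = 1) (hb : ‖b‖^2 + γ^2 = 1) :
    (β*γ)^2 ≤ (1 - (conj a * b).re)^2 := by
  have h1 : (conj a * b).re ≤ ‖conj a * b‖ := Complex.re_le_norm _
  have h2 : ‖conj a * b‖ = ‖a‖ * ‖b‖ := by rw [norm_mul, RCLike.norm_conj]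
  have hc := hc_nonneg a b β γ ha hb
  nlinarith [norm_nonneg a, norm_nonneg b, sq_nonneg (‖a‖-‖b‖), sq_nonneg (‖a‖*‖b‖-1)]

-- eigenvalue facts
lemma eig_facts (a b : ℂ) (β γ R : ℝ)
    (ha : ‖a‖^2 + β^2 = 1) (hb : ‖b‖^2 + γ^2 = 1)
    (hR : 0 ≤ R) (hR2 : R^2 = (1 - (conj a * b).re)^2 - (β*γ)^2) :
    (1 - (conj a * b).re + R - (1 - 2*(conj a * b).re + ‖a‖^2))
      * (1 - (conj a * b).re + R - β^2) = ‖((β:ℝ):ℂ)*(a-b)‖^2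
    ∧ 0 ≤ 1 - (conj a * b).re + R - (1 - 2*(conj a * b).re + ‖a‖^2)
    ∧ 0 ≤ 1 - (conj a * b).re + R - β^2 := by
  have hz := z_id a b β
  have hprod : (1 - (conj a * b).re + R - (1 - 2*(conj a * b).re + ‖a‖^2))
      * (1 - (conj a * b).re + R - β^2) = ‖((β:ℝ):ℂ)*(a-b)‖^2 := by
    rw [hz]; linear_combination hR2 - (1 - ((starRingEnd ℂ) a * b).re + R) * ha - β^2 * hb
  have hsum : (1 - (conj a * b).re + R - (1 - 2*(conj a * b).re + ‖a‖^2))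
      + (1 - (conj a * b).re + R - β^2) = 2*R := by linear_combination -ha
  have h1 : 0 ≤ 1 - (conj a * b).re + R - (1 - 2*(conj a * b).re + ‖a‖^2) := by
    by_contra h
    push_neg at h
    nlinarith [norm_nonneg (((β:ℝ):ℂ)*(a-b)), sq_nonneg ‖((β:ℝ):ℂ)*(a-b)‖]
  have h2 : 0 ≤ 1 - (conj a * b).re + R - β^2 := by
    by_contra h
    push_neg at h
    nlinarith [sq_nonneg ‖((β:ℝ):ℂ)*(a-b)‖]
  exact ⟨hprod, h1, h2⟩

lemma key_le (a b x y x' : ℂ) (β γ R : ℝ)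
    (ha : ‖a‖^2 + β^2 = 1) (hb : ‖b‖^2 + γ^2 = 1)
    (hR : 0 ≤ R) (hR2 : R^2 = (1 - (conj a * b).re)^2 - (β*γ)^2)
    (hx' : x' = conj a * x + (β:ℂ)*y) :
    ‖x‖^2 + ‖x'‖^2 - 2*(conj x * x' * b).re
      ≤ (1 - (conj a * b).re + R) * (‖x‖^2 + ‖y‖^2) := by
  obtain ⟨hprod, h1, h2⟩ := eig_facts a b β γ R ha hb hR hR2
  rw [quad_id a b x y x' β γ hb hx', A11_id a b γ hb] at *
  set z : ℂ := ((β:ℝ):ℂ)*(a-b) with hzdef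
  set a1 : ℝ := 1 - (conj a * b).re + R - (1 - 2*(conj a * b).re + ‖a‖^2) with ha1
  set a2 : ℝ := 1 - (conj a * b).re + R - β^2 with ha2
  have hre : (z * conj x * y).re ≤ ‖z‖*‖x‖*‖y‖ := by
    calc (z * conj x * y).re ≤ ‖z * conj x * y‖ := Complex.re_le_norm _
    _ = ‖z‖*‖x‖*‖y‖ := by rw [norm_mul, norm_mul, RCLike.norm_conj]
  have hzz : Real.sqrt a1 * Real.sqrt a2 = ‖z‖ := by
    rw [← Real.sqrt_mul h1, hprod, Real.sqrt_sq (norm_nonneg z)]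
  nlinarith [sq_nonneg (Real.sqrt a1 * ‖x‖ - Real.sqrt a2 * ‖y‖),
    Real.sq_sqrt h1, Real.sq_sqrt h2, norm_nonneg x, norm_nonneg y,
    mul_nonneg (norm_nonneg x) (norm_nonneg y)]

lemma key_eq (a b : ℂ) (β γ R : ℝ)
    (ha : ‖a‖^2 + β^2 = 1) (hb : ‖b‖^2 + γ^2 = 1)
    (hR : 0 ≤ R) (hR2 : R^2 = (1 - (conj a * b).re)^2 - (β*γ)^2) :
    ∃ x y : ℂ, (y ≠ 0 → β ≠ 0) ∧ ¬(x = 0 ∧ y = 0) ∧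
      ‖x‖^2 + ‖conj a * x + (β:ℂ)*y‖^2
          - 2*(conj x * (conj a * x + (β:ℂ)*y) * b).re
        = (1 - (conj a * b).re + R) * (‖x‖^2 + ‖y‖^2) := by
  obtain ⟨hprod, h1, h2⟩ := eig_facts a b β γ R ha hb hR hR2
  have hc := hc_nonneg a b β γ ha hb
  set z : ℂ := ((β:ℝ):ℂ)*(a-b) with hzdef
  set a1 : ℝ := 1 - (conj a * b).re + R - (1 - 2*(conj a * b).re + ‖a‖^2) with ha1
  set a2 : ℝ := 1 - (conj a * b).re + R - β^2 with ha2
  by_cases hcase : z = 0 ∧ a1 = 0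
  · refine ⟨1, 0, fun h => absurd rfl h, by simp, ?_⟩
    rw [quad_id a b 1 0 _ β γ hb rfl, A11_id a b γ hb]
    have h0 : 1 - (conj a * b).re + R - (1 - 2*(conj a * b).re + ‖a‖^2) = 0 := by
      rw [← ha1]; exact hcase.2
    simp only [norm_one, norm_zero, mul_zero, Complex.zero_re]
    linarith [h0]
  · refine ⟨z, (a1:ℂ), ?_, ?_, ?_⟩
    · intro hy hβ0
      apply hcase
      have hz0 : z = 0 := by rw [hzdef, hβ0]; simp
      refine ⟨hz0, ?_⟩
      have hZ : ‖z‖^2 = 0 := by rw [hz0]; simp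
      have : a1 * a2 = 0 := by rw [hprod, hZ]
      rcases mul_eq_zero.mp this with h | h
      · exact h
      · -- a2 = 0 : c + R - β² = 0 with β = 0, c,R ≥ 0 ⇒ c = R = 0 ⇒ a1 = 0
        rw [ha2, hβ0] at h
        have hA : ‖a‖^2 = 1 := by rw [hβ0] at ha; linarith
        rw [ha1]
        nlinarith [h, hc, hR]
    · intro ⟨hz0, hy0⟩
      exact hcase ⟨hz0, by exact_mod_cast hy0⟩
    · rw [quad_id a b z (a1:ℂ) _ β γ hb rfl, A11_id a b γ hb]
      have e1 : (z * conj z * (a1:ℂ)).re = ‖z‖^2 * a1 := by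
        simp only [nsq, Complex.mul_re, Complex.mul_im, Complex.conj_re, Complex.conj_im,
          Complex.ofReal_re, Complex.ofReal_im]
        ring
      have hy2 : ‖(a1:ℂ)‖^2 = a1^2 := by
        rw [Complex.norm_real, Real.norm_eq_abs, sq_abs]
      have hA11' : 1 - 2*(conj a * b).re + ‖a‖^2 = (1 - (conj a * b).re + R) - a1 := by
        rw [ha1]; ring
      have hβ2' : β^2 = (1 - (conj a * b).re + R) - a2 := by
        rw [ha2]; ring
      rw [e1, hy2, hA11', hβ2']
      linear_combination (-a1) * hprod

noncomputable section

/-- The rank-one operator `ξ ⊠ η : H →L[ℂ] K`, `ζ ↦ ⟪ξ, ζ⟫ • η`. -/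
def rankOne {H K : Type*} [NormedAddCommGroup H] [InnerProductSpace ℂ H]
    [NormedAddCommGroup K] [InnerProductSpace ℂ K] (ξ : H) (η : K) : H →L[ℂ] K :=
  (ContinuousLinearMap.toSpanSingleton ℂ η).comp (innerSL ℂ ξ)

section Aux
variable {H K : Type*} [NormedAddCommGroup H] [InnerProductSpace ℂ H]
    [NormedAddCommGroup K] [InnerProductSpace ℂ K]

lemma rankOne_apply (ξ : H) (η : K) (ζ : H) : rankOne ξ η ζ = (inner ℂ ξ ζ : ℂ) • η := rfl

/-- norm-sq of unit vector difference decomposition -/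
lemma unit_decomp (u w : H) (hu : ‖u‖ = 1) (hw : ‖w‖ = 1) :
    ‖(inner ℂ u w : ℂ)‖^2 + ‖w - (inner ℂ u w : ℂ) • u‖^2 = 1 := by
  set a : ℂ := inner ℂ u w with hadef
  have h := @norm_sub_sq ℂ H _ _ _ w (a • u)
  have h1 : (inner ℂ w (a • u) : ℂ) = a * conj a := by
    rw [inner_smul_right]
    congr 1
    rw [← inner_conj_symm w u, ← hadef]
  have h2 : (a * conj a).re = ‖a‖^2 := by
    rw [Complex.mul_conj']
    norm_cast
  have h3 : ‖a • u‖ = ‖a‖ := by rw [norm_smul, hu, mul_one]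
  simp only [RCLike.re_to_complex] at h
  rw [h1, h2, h3, hw] at h
  rw [h]; ring

end Aux

set_option maxHeartbeats 2000000 in
/-- The formula for the distance between two minimal tripotents (rank-one partial isometries)
in `K(H,K)`. -/
theorem norm_sub_sq_rankOne
    {H K : Type*}
    [NormedAddCommGroup H] [InnerProductSpace ℂ H] [CompleteSpace H]
    [NormedAddCommGroup K] [InnerProductSpace ℂ K] [CompleteSpace K]
    (ξ ξ' : H) (η η' : K)
    (hξ : ‖ξ‖ = 1) (hξ' : ‖ξ'‖ = 1) (hη : ‖η‖ = 1) (hη' : ‖η'‖ = 1) :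
    ‖rankOne ξ η - rankOne ξ' η'‖ ^ 2 =
      (1 - ((inner ℂ ξ' ξ : ℂ) * (inner ℂ η η' : ℂ)).re) +
        Real.sqrt ((1 - ((inner ℂ ξ' ξ : ℂ) * (inner ℂ η η' : ℂ)).re) ^ 2 -
          (‖ξ' - (inner ℂ ξ ξ' : ℂ) • ξ‖ * ‖η' - (inner ℂ η η' : ℂ) • η‖) ^ 2) := by
  set a : ℂ := inner ℂ ξ ξ' with hadef
  set b : ℂ := inner ℂ η η' with hbdef
  have hconj : (inner ℂ ξ' ξ : ℂ) = conj a := by rw [hadef, inner_conj_symm]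
  set β : ℝ := ‖ξ' - a • ξ‖ with hβdef
  set γ : ℝ := ‖η' - b • η‖ with hγdef
  have ha : ‖a‖^2 + β^2 = 1 := unit_decomp ξ ξ' hξ hξ'
  have hb : ‖b‖^2 + γ^2 = 1 := unit_decomp η η' hη hη'
  rw [hconj]
  set c : ℝ := 1 - (conj a * b).re with hcdef
  set R : ℝ := Real.sqrt (c^2 - (β*γ)^2) with hRdef
  have hβ0 : 0 ≤ β := norm_nonneg _
  have hγ0 : 0 ≤ γ := norm_nonneg _
  have hc : 0 ≤ c := hc_nonneg a b β γ ha hb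
  have hcd : (β*γ)^2 ≤ c^2 := cd_nonneg a b β γ ha hb
  have hR : 0 ≤ R := Real.sqrt_nonneg _
  have hR2 : R^2 = c^2 - (β*γ)^2 := Real.sq_sqrt (by linarith)
  have hlam : 0 ≤ c + R := by linarith
  set T := rankOne ξ η - rankOne ξ' η' with hTdef
  -- pointwise norm formula
  have hTnorm : ∀ ζ : H, ‖T ζ‖^2 = ‖(inner ℂ ξ ζ : ℂ)‖^2 + ‖(inner ℂ ξ' ζ : ℂ)‖^2
      - 2*(conj (inner ℂ ξ ζ : ℂ) * (inner ℂ ξ' ζ : ℂ) * b).re := by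
    intro ζ
    have happ : T ζ = (inner ℂ ξ ζ : ℂ) • η - (inner ℂ ξ' ζ : ℂ) • η' := by
      simp [hTdef, rankOne_apply]
    rw [happ]
    have h := @norm_sub_sq ℂ K _ _ _ ((inner ℂ ξ ζ : ℂ) • η) ((inner ℂ ξ' ζ : ℂ) • η')
    simp only [RCLike.re_to_complex] at h
    rw [h, inner_smul_left, inner_smul_right, norm_smul, norm_smul, hη, hη', ← hbdef]
    ring_nf
  -- the inner-product of ξ' against ζ decomposes
  have hdec : ∀ ζ : H, ∃ y : ℂ, (inner ℂ ξ' ζ : ℂ) = conj a * (inner ℂ ξ ζ : ℂ) + (β:ℂ)*y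
      ∧ ‖(inner ℂ ξ ζ : ℂ)‖^2 + ‖y‖^2 ≤ ‖ζ‖^2 := by
    intro ζ
    by_cases hβz : β = 0
    · refine ⟨0, ?_, ?_⟩
      · have hξ'eq : ξ' = a • ξ := by
          have : ξ' - a • ξ = 0 := by rwa [← norm_eq_zero]
          linear_combination (norm := abel) this -- ξ' = a•ξ
        rw [hξ'eq, inner_smul_left]
        simp
      · have := norm_inner_le_norm (𝕜 := ℂ) ξ ζ
        rw [hξ, one_mul] at this
        simp only [norm_zero]
        nlinarith [norm_nonneg (inner ℂ ξ ζ : ℂ), norm_nonneg ζ]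
    · -- e := β⁻¹ • (ξ' - a•ξ)
      set e : H := ((β:ℂ))⁻¹ • (ξ' - a • ξ) with hedef
      have hβc : ((β:ℂ)) ≠ 0 := by exact_mod_cast hβz
      have he1 : ‖e‖ = 1 := by
        rw [hedef, norm_smul, norm_inv, Complex.norm_real, Real.norm_eq_abs,
          abs_of_nonneg hβ0, ← hβdef]
        field_simp
      have hξe : (inner ℂ ξ e : ℂ) = 0 := by
        rw [hedef, inner_smul_right, inner_sub_right, inner_smul_right, ← hadef,
          inner_self_eq_norm_sq_to_K, hξ]
        simp
      have hsplit : ξ' = a • ξ + (β:ℂ) • e := by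
        rw [hedef, smul_inv_smul₀ hβc]
        abel
      refine ⟨inner ℂ e ζ, ?_, ?_⟩
      · rw [hsplit, inner_add_left, inner_smul_left, inner_smul_left, Complex.conj_ofReal]
      · -- Bessel
        set x : ℂ := inner ℂ ξ ζ with hxdef
        set y : ℂ := inner ℂ e ζ with hydef
        have hbessel := @norm_sub_sq ℂ H _ _ _ ζ (x • ξ + y • e)
        have hcx : (inner ℂ ζ ξ : ℂ) = conj x := by rw [hxdef, inner_conj_symm]
        have hcy : (inner ℂ ζ e : ℂ) = conj y := by rw [hydef, inner_conj_symm]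
        have hinner : (inner ℂ ζ (x • ξ + y • e) : ℂ) = x * conj x + y * conj y := by
          rw [inner_add_right, inner_smul_right, inner_smul_right, hcx, hcy]
        have hwnorm : ‖x • ξ + y • e‖^2 = ‖x‖^2 + ‖y‖^2 := by
          have h := @norm_add_sq ℂ H _ _ _ (x • ξ) (y • e)
          simp only [RCLike.re_to_complex] at h
          rw [h, inner_smul_left, inner_smul_right, hξe, norm_smul, norm_smul, hξ, he1]
          simp
        simp only [RCLike.re_to_complex] at hbessel
        rw [hinner, hwnorm] at hbessel
        have hre : (x * conj x + y * conj y).re = ‖x‖^2 + ‖y‖^2 := by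
          simp only [Complex.add_re, Complex.mul_conj']
          norm_cast
        rw [hre] at hbessel
        have h0 : 0 ≤ ‖ζ - (x • ξ + y • e)‖^2 := sq_nonneg _
        linarith [hbessel, h0]
  -- upper bound
  have hub : ∀ ζ : H, ‖T ζ‖^2 ≤ (c + R) * ‖ζ‖^2 := by
    intro ζ
    obtain ⟨y, hy, hby⟩ := hdec ζ
    have := key_le a b (inner ℂ ξ ζ) y (inner ℂ ξ' ζ) β γ R ha hb hR (by rw [hR2, hcdef]) hy
    rw [hTnorm ζ]
    calc ‖(inner ℂ ξ ζ : ℂ)‖^2 + ‖(inner ℂ ξ' ζ : ℂ)‖^2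
        - 2*(conj (inner ℂ ξ ζ : ℂ) * (inner ℂ ξ' ζ : ℂ) * b).re
        ≤ (c + R) * (‖(inner ℂ ξ ζ : ℂ)‖^2 + ‖y‖^2) := this
      _ ≤ (c + R) * ‖ζ‖^2 := by
          apply mul_le_mul_of_nonneg_left hby hlam
  -- witness
  obtain ⟨x, y, hyβ, hxy0, heq⟩ := key_eq a b β γ R ha hb hR (by rw [hR2, hcdef])
  have hwit : ∃ ζ₀ : H, ζ₀ ≠ 0 ∧ ‖T ζ₀‖^2 = (c + R) * ‖ζ₀‖^2 := by
    by_cases hy0 : y = 0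
    · have hx0 : x ≠ 0 := fun h => hxy0 ⟨h, hy0⟩
      refine ⟨x • ξ, ?_, ?_⟩
      · have hξne : ξ ≠ 0 := by intro h; rw [h, norm_zero] at hξ; norm_num at hξ
        simp [smul_eq_zero, hx0, hξne]
      · rw [hTnorm]
        have h1 : (inner ℂ ξ (x • ξ) : ℂ) = x := by
          rw [inner_smul_right, inner_self_eq_norm_sq_to_K, hξ]; simp
        have h2 : (inner ℂ ξ' (x • ξ) : ℂ) = conj a * x + (β:ℂ)*y := by
          rw [inner_smul_right, hconj, hy0]
          ring
        have h3 : ‖x • ξ‖^2 = ‖x‖^2 + ‖y‖^2 := by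
          rw [norm_smul, hξ, hy0]; simp
        rw [h1, h2, h3, ← heq, hy0]
    · have hβz : β ≠ 0 := hyβ hy0
      set e : H := ((β:ℂ))⁻¹ • (ξ' - a • ξ) with hedef
      have hβc : ((β:ℂ)) ≠ 0 := by exact_mod_cast hβz
      have he1 : ‖e‖ = 1 := by
        rw [hedef, norm_smul, norm_inv, Complex.norm_real, Real.norm_eq_abs,
          abs_of_nonneg hβ0, ← hβdef]
        field_simp
      have hξe : (inner ℂ ξ e : ℂ) = 0 := by
        rw [hedef, inner_smul_right, inner_sub_right, inner_smul_right, ← hadef,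
          inner_self_eq_norm_sq_to_K, hξ]
        simp
      have hsplit : ξ' = a • ξ + (β:ℂ) • e := by
        rw [hedef, smul_inv_smul₀ hβc]
        abel
      refine ⟨x • ξ + y • e, ?_, ?_⟩
      · intro h0
        have hn : ‖x • ξ + y • e‖^2 = ‖x‖^2 + ‖y‖^2 := by
          have h := @norm_add_sq ℂ H _ _ _ (x • ξ) (y • e)
          simp only [RCLike.re_to_complex] at h
          rw [h, inner_smul_left, inner_smul_right, hξe, norm_smul, norm_smul, hξ, he1]
          simp
        rw [h0] at hn
        simp only [norm_zero] at hn
        have : y = 0 := by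
          have h3 : ‖y‖^2 = 0 := by
            have hx2 := sq_nonneg ‖x‖
            have hy2 := sq_nonneg ‖y‖
            linarith
          simpa using (pow_eq_zero_iff (two_ne_zero)).mp h3
        exact hy0 this
      · rw [hTnorm]
        have h1 : (inner ℂ ξ (x • ξ + y • e) : ℂ) = x := by
          rw [inner_add_right, inner_smul_right, inner_smul_right,
            inner_self_eq_norm_sq_to_K, hξ, hξe]
          simp
        have h2 : (inner ℂ ξ' (x • ξ + y • e) : ℂ) = conj a * x + (β:ℂ)*y := by
          conv_lhs => rw [hsplit]
          rw [inner_add_left, inner_smul_left, inner_smul_left, Complex.conj_ofReal, h1]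
          congr 1
          rw [inner_add_right, inner_smul_right, inner_smul_right]
          have hee : (inner ℂ e e : ℂ) = 1 := by
            rw [inner_self_eq_norm_sq_to_K, he1]; simp
          have heξ : (inner ℂ e ξ : ℂ) = 0 := by
            rw [← inner_conj_symm, hξe]; simp
          rw [hee, heξ]
          ring
        have h3 : ‖x • ξ + y • e‖^2 = ‖x‖^2 + ‖y‖^2 := by
          have h := @norm_add_sq ℂ H _ _ _ (x • ξ) (y • e)
          simp only [RCLike.re_to_complex] at h
          rw [h, inner_smul_left, inner_smul_right, hξe, norm_smul, norm_smul, hξ, he1]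
          simp
        rw [h1, h2, h3, ← heq]
  -- conclude
  obtain ⟨ζ₀, hζ0, hζeq⟩ := hwit
  have hTle : ‖T‖ ≤ Real.sqrt (c + R) := by
    apply ContinuousLinearMap.opNorm_le_bound _ (Real.sqrt_nonneg _)
    intro ζ
    have h := hub ζ
    have : ‖T ζ‖ = Real.sqrt (‖T ζ‖^2) := by rw [Real.sqrt_sq (norm_nonneg _)]
    rw [this]
    calc Real.sqrt (‖T ζ‖^2) ≤ Real.sqrt ((c+R) * ‖ζ‖^2) := Real.sqrt_le_sqrt h
      _ = Real.sqrt (c+R) * ‖ζ‖ := by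
          rw [Real.sqrt_mul hlam, Real.sqrt_sq (norm_nonneg _)]
  have hTge : (c + R) * ‖ζ₀‖^2 ≤ ‖T‖^2 * ‖ζ₀‖^2 := by
    rw [← hζeq]
    have h := T.le_opNorm ζ₀
    nlinarith [norm_nonneg (T ζ₀), norm_nonneg ζ₀, ContinuousLinearMap.opNorm_nonneg T]
  have hζpos : 0 < ‖ζ₀‖^2 := pow_pos (norm_pos_iff.mpr hζ0) 2
  have hge : c + R ≤ ‖T‖^2 := by
    by_contra hlt
    push_neg at hlt
    nlinarith
  have hle : ‖T‖^2 ≤ c + R := by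
    calc ‖T‖^2 ≤ (Real.sqrt (c+R))^2 := by
          apply pow_le_pow_left₀ (ContinuousLinearMap.opNorm_nonneg T) hTle
      _ = c + R := Real.sq_sqrt hlam
  linarith
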